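/- Let N be a finite set, let g be a monotone submodular set function on N, let k ≥ 1, and let A ⊆ N with |A| = k. Suppose S ⊆ N and s* ∈ N maximizes the marginal gain g(S ∪ {s}) − g(S) over all s ∈ N. Then g(A) − g(S ∪ {s*}) ≤ (1 − 1/k) · ( g(A) − g(S) ). -/
import Mathlib

/-- A set function `g` on the ground set `N` is submodular if for all `A ⊆ B ⊆ N` and all
`s ∈ N \ B`, `g(A ∪ {s}) − g(A) ≥ g(B ∪ {s}) − g(B)`. -/
def SubmodularOn {α : Type*} [DecidableEq α] (N : Finset α) (g : Finset α → ℝ) : Prop :=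
  ∀ A B : Finset α, A ⊆ B → B ⊆ N → ∀ s ∈ N, s ∉ B →
    g (B ∪ {s}) - g B ≤ g (A ∪ {s}) - g A

/-- A set function `g` on the ground set `N` is monotone if `A ⊆ B ⊆ N` implies
`g(A) ≤ g(B)`. -/
def MonotoneSetFn {α : Type*} (N : Finset α) (g : Finset α → ℝ) : Prop :=
  ∀ A B : Finset α, A ⊆ B → B ⊆ N → g A ≤ g B

lemma sum_marginals {α : Type*} [DecidableEq α] (N : Finset α) (g : Finset α → ℝ)
    (hsub : SubmodularOn N g) (hmono : MonotoneSetFn N g) (S : Finset α) (hS : S ⊆ N) :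
    ∀ T : Finset α, T ⊆ N → g (S ∪ T) - g S ≤ ∑ s ∈ T, (g (S ∪ {s}) - g S) := by
  intro T
  induction T using Finset.induction with
  | empty => simp
  | @insert a T ha ih =>
    intro hT
    have haN : a ∈ N := hT (Finset.mem_insert_self a T)
    have hTN : T ⊆ N := (Finset.subset_insert a T).trans hT
    rw [Finset.sum_insert ha]
    have h1 : g (S ∪ insert a T) - g (S ∪ T) ≤ g (S ∪ {a}) - g S := by
      by_cases haST : a ∈ S ∪ T
      · have : S ∪ insert a T = S ∪ T := by
          rw [Finset.union_insert, Finset.insert_eq_self.mpr haST]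
        rw [this]
        have hm : g S ≤ g (S ∪ {a}) :=
          hmono S (S ∪ {a}) Finset.subset_union_left
            (Finset.union_subset hS (Finset.singleton_subset_iff.mpr haN))
        linarith
      · have := hsub S (S ∪ T) Finset.subset_union_left (Finset.union_subset hS hTN) a haN haST
        calc g (S ∪ insert a T) - g (S ∪ T) = g ((S ∪ T) ∪ {a}) - g (S ∪ T) := by
              rw [Finset.union_insert, Finset.union_comm (S ∪ T) {a}, ← Finset.insert_eq]
          _ ≤ g (S ∪ {a}) - g S := this
    linarith [ih hTN]

/-- One step of the greedy algorithm shrinks the gap to `g(A)` by a factor `1 − 1/k`. -/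
theorem greedy_step_gap_shrinks {α : Type*} [DecidableEq α] (N : Finset α)
    (g : Finset α → ℝ) (hsub : SubmodularOn N g) (hmono : MonotoneSetFn N g)
    (k : ℕ) (hk : 1 ≤ k) (A : Finset α) (hA : A ⊆ N) (hcard : A.card = k)
    (S : Finset α) (hS : S ⊆ N) (sStar : α) (hsStar : sStar ∈ N)
    (hmax : ∀ s ∈ N, g (S ∪ {s}) - g S ≤ g (S ∪ {sStar}) - g S) :
    g A - g (S ∪ {sStar}) ≤ (1 - 1 / (k : ℝ)) * (g A - g S) := by
  have hkpos : (0:ℝ) < k := by exact_mod_cast hk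
  set d := g (S ∪ {sStar}) - g S with hd
  -- d ≥ 0
  have hAne : A.Nonempty := Finset.card_pos.mp (by omega)
  obtain ⟨a0, ha0⟩ := hAne
  have hd0 : 0 ≤ d := by
    have h1 := hmax a0 (hA ha0)
    have h2 : g S ≤ g (S ∪ {a0}) :=
      hmono S (S ∪ {a0}) Finset.subset_union_left
        (Finset.union_subset hS (Finset.singleton_subset_iff.mpr (hA ha0)))
    linarith
  have hsum := sum_marginals N g hsub hmono S hS A hA
  have hbound : ∑ s ∈ A, (g (S ∪ {s}) - g S) ≤ (k:ℝ) * d := by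
    calc ∑ s ∈ A, (g (S ∪ {s}) - g S) ≤ ∑ _s ∈ A, d :=
          Finset.sum_le_sum fun s hs => hmax s (hA hs)
      _ = (k:ℝ) * d := by rw [Finset.sum_const, hcard]; push_cast; ring
  have hmonoA : g A ≤ g (S ∪ A) :=
    hmono A (S ∪ A) Finset.subset_union_right (Finset.union_subset hS hA)
  have hG : g A - g S ≤ (k:ℝ) * d := by linarith
  have : g A - g (S ∪ {sStar}) = (g A - g S) - d := by rw [hd]; ring
  rw [this]
  rw [sub_mul, one_mul]
  have : (1 / (k:ℝ)) * (g A - g S) ≤ d := by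
    rw [div_mul_eq_mul_div, one_mul, div_le_iff₀ hkpos]
    linarith
  linarith
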